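/- arXiv:1702.07148 — 2 statements merged into one kernel-verified Lean document; each statement's English description precedes it below -/
import Mathlib

section
/- (Micchelli; nonsingularity of the multiquadric interpolation matrix.) Let x_1, …, x_n be pairwise distinct points in ℝ^d and let ε > 0. Then the n × n symmetric matrix A with entries A_{ik} = √(1 + ε² ‖x_i − x_k‖²) is invertible. Moreover, A has exactly one positive eigenvalue and n − 1 negative eigenvalues. -/
set_option maxHeartbeats 1000000

open Real MeasureTheory Set Filter Topology Metric

section Aux

lemma gram_pow_psd {d n : ℕ} (x : Fin n → EuclideanSpace ℝ (Fin d)) (m : ℕ)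
    (b : Fin n → ℝ) :
    0 ≤ ∑ i, ∑ k, b i * b k * (inner ℝ (x i) (x k) : ℝ) ^ m := by
  have hinner : ∀ i k, (inner ℝ (x i) (x k) : ℝ) = ∑ j, x i j * x k j := by
    intro i k; simp [PiLp.inner_apply, mul_comm]
  have hpow : ∀ i k : Fin n, (inner ℝ (x i) (x k) : ℝ) ^ m
      = ∑ f ∈ Fintype.piFinset (fun _ : Fin m => (Finset.univ : Finset (Fin d))),
          (∏ l, x i (f l)) * (∏ l, x k (f l)) := by
    intro i k
    rw [hinner]
    calc (∑ j, x i j * x k j) ^ m = ∏ _l : Fin m, (∑ j, x i j * x k j) := by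
          rw [Finset.prod_const, Finset.card_univ, Fintype.card_fin]
      _ = ∑ f ∈ Fintype.piFinset (fun _ : Fin m => (Finset.univ : Finset (Fin d))),
          ∏ l, (x i (f l) * x k (f l)) := by
          rw [Finset.prod_univ_sum]
      _ = _ := by
          refine Finset.sum_congr rfl fun f _ => ?_
          rw [Finset.prod_mul_distrib]
  calc (0:ℝ) ≤ ∑ f ∈ Fintype.piFinset (fun _ : Fin m => (Finset.univ : Finset (Fin d))),
        (∑ i, b i * ∏ l, x i (f l)) ^ 2 :=
        Finset.sum_nonneg fun f _ => sq_nonneg _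
    _ = ∑ i, ∑ k, b i * b k * (inner ℝ (x i) (x k) : ℝ) ^ m := by
        simp_rw [sq, Finset.sum_mul_sum, hpow, Finset.mul_sum]
        rw [Finset.sum_comm]
        refine Finset.sum_congr rfl fun i _ => ?_
        rw [Finset.sum_comm]
        refine Finset.sum_congr rfl fun k _ => Finset.sum_congr rfl fun f _ => by ring

lemma gauss_psd {d n : ℕ} (x : Fin n → EuclideanSpace ℝ (Fin d)) (τ : ℝ) (hτ : 0 ≤ τ)
    (c : Fin n → ℝ) :
    0 ≤ ∑ i, ∑ k, c i * c k * Real.exp (-τ * ‖x i - x k‖ ^ 2) := by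
  have hker : ∀ i k : Fin n, Real.exp (-τ * ‖x i - x k‖ ^ 2)
      = Real.exp (-τ * ‖x i‖^2) * Real.exp (-τ * ‖x k‖^2)
        * Real.exp (2 * τ * (inner ℝ (x i) (x k) : ℝ)) := by
    intro i k
    rw [← Real.exp_add, ← Real.exp_add]
    congr 1
    have : ‖x i - x k‖ ^ 2 = ‖x i‖^2 - 2 * (inner ℝ (x i) (x k) : ℝ) + ‖x k‖^2 :=
      norm_sub_sq_real (x i) (x k)
    rw [this]; ring
  set b : Fin n → ℝ := fun i => c i * Real.exp (-τ * ‖x i‖^2) with hb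
  have hmain : ∑ i, ∑ k, c i * c k * Real.exp (-τ * ‖x i - x k‖ ^ 2)
      = ∑ i, ∑ k, b i * b k * Real.exp (2 * τ * (inner ℝ (x i) (x k) : ℝ)) := by
    refine Finset.sum_congr rfl fun i _ => Finset.sum_congr rfl fun k _ => ?_
    rw [hker]; simp only [hb]; ring
  rw [hmain]
  set F : Fin n → Fin n → ℕ → ℝ := fun i k m =>
    b i * b k * ((2 * τ)^m * (inner ℝ (x i) (x k) : ℝ)^m / (Nat.factorial m)) with hF
  have hsummable : ∀ (i k : Fin n), Summable (F i k) := by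
    intro i k
    have := (Real.summable_pow_div_factorial (2 * τ * (inner ℝ (x i) (x k) : ℝ))).mul_left
      (b i * b k)
    simpa [hF, mul_pow, mul_div_assoc] using this
  have hexp : ∀ i k : Fin n, b i * b k * Real.exp (2 * τ * (inner ℝ (x i) (x k) : ℝ))
      = ∑' m : ℕ, F i k m := by
    intro i k
    rw [Real.exp_eq_exp_ℝ, NormedSpace.exp_eq_tsum_div, ← tsum_mul_left]
    simp_rw [hF, mul_pow]
  simp_rw [hexp]
  have h1 : ∀ i, ∑ k, ∑' m, F i k m = ∑' m, ∑ k, F i k m :=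
    fun i => (Summable.tsum_finsetSum fun k _ => hsummable i k).symm
  simp_rw [h1]
  rw [← Summable.tsum_finsetSum fun i _ => summable_sum fun k _ => hsummable i k]
  refine tsum_nonneg fun m => ?_
  have : ∑ i, ∑ k, F i k m
      = ((2 * τ)^m / (Nat.factorial m)) * ∑ i, ∑ k, b i * b k * (inner ℝ (x i) (x k) : ℝ)^m := by
    simp_rw [Finset.mul_sum]
    exact Finset.sum_congr rfl fun i _ => Finset.sum_congr rfl fun k _ => by rw [hF]; ring
  rw [this]
  exact mul_nonneg (div_nonneg (pow_nonneg (by linarith) m) (Nat.cast_nonneg _))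
    (gram_pow_psd x m b)

noncomputable def g (a s : ℝ) : ℝ := (Real.exp (-s^2) - Real.exp (-a * s^2)) / s^2

lemma g_meas (a : ℝ) : Measurable (g a) := by
  unfold g
  exact ((Real.continuous_exp.comp (continuous_pow 2).neg).sub
    (Real.continuous_exp.comp ((continuous_const.mul (continuous_pow 2))))).measurable.div
    (continuous_pow 2).measurable

lemma g_nonneg {a s : ℝ} (ha : 1 ≤ a) : 0 ≤ g a s := by
  unfold g
  apply div_nonneg _ (sq_nonneg s)
  have : -a * s^2 ≤ -s^2 := by nlinarith [sq_nonneg s]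
  linarith [Real.exp_le_exp.mpr this]

lemma g_le_exp {a s : ℝ} (ha : 1 ≤ a) (hs : 1 ≤ s) : g a s ≤ Real.exp (-s^2) := by
  unfold g
  have h1 : 1 ≤ s^2 := by nlinarith
  have h2 : Real.exp (-a * s^2) > 0 := Real.exp_pos _
  rw [div_le_iff₀ (by linarith)]
  nlinarith [Real.exp_pos (-s^2)]

lemma g_le_const {a s : ℝ} (ha : 1 ≤ a) (hs : 0 < s) : g a s ≤ a - 1 := by
  unfold g
  rw [div_le_iff₀ (by positivity)]
  have key : Real.exp (-s^2) - Real.exp (-a*s^2) ≤ (a-1) * s^2 := by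
    have h1 : Real.exp (-s^2) - Real.exp (-a*s^2)
        = Real.exp (-a*s^2) * (Real.exp ((a-1)*s^2) - 1) := by
      rw [mul_sub, ← Real.exp_add, mul_one]; ring_nf
    rw [h1]
    have h2 : Real.exp (-a*s^2) ≤ 1 := Real.exp_le_one_iff.mpr (by nlinarith [sq_nonneg s])
    have h3 : (0:ℝ) ≤ (a-1)*s^2 := by nlinarith [sq_nonneg s]
    -- exp(y) - 1 ≤ y * exp(y) for y ≥ 0 : use convexity?  Use: exp y - 1 ≤ y e^y
    -- simpler: exp(-a s²) * (exp((a-1)s²) - 1) = e^{-s²}(1 - e^{-(a-1)s²}) ≤ 1 - e^{-(a-1)s²} ≤ (a-1)s²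
    have h4 : Real.exp (-a*s^2) * (Real.exp ((a-1)*s^2) - 1)
        = Real.exp (-s^2) * (1 - Real.exp (-((a-1)*s^2))) := by
      rw [mul_sub, mul_sub, ← Real.exp_add, ← Real.exp_add, mul_one, mul_one]
      ring_nf
    rw [h4]
    have h5 : 1 - Real.exp (-((a-1)*s^2)) ≤ (a-1)*s^2 := by
      have := Real.add_one_le_exp (-((a-1)*s^2))
      linarith
    have h6 : Real.exp (-s^2) ≤ 1 := Real.exp_le_one_iff.mpr (by nlinarith)
    have h7 : 0 ≤ 1 - Real.exp (-((a-1)*s^2)) := by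
      have : Real.exp (-((a-1)*s^2)) ≤ 1 := Real.exp_le_one_iff.mpr (by nlinarith)
      linarith
    nlinarith
  linarith

lemma integrable_g {a : ℝ} (ha : 1 ≤ a) : IntegrableOn (g a) (Set.Ioi 0) := by
  have hsplit : (Set.Ioi (0:ℝ)) = Set.Ioc 0 1 ∪ Set.Ioi 1 := (Set.Ioc_union_Ioi_eq_Ioi zero_le_one).symm
  rw [hsplit]
  apply IntegrableOn.union
  · -- bounded by a - 1 on Ioc 0 1
    apply Integrable.mono' (integrableOn_const (C := a - 1) measure_Ioc_lt_top.ne)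
      ((g_meas a).aestronglyMeasurable)
    filter_upwards [ae_restrict_mem measurableSet_Ioc] with s hs
    rw [Real.norm_eq_abs, abs_of_nonneg (g_nonneg ha)]
    exact g_le_const ha hs.1
  · apply Integrable.mono'
      (((integrable_exp_neg_mul_sq one_pos).integrableOn (s := Set.Ioi 1)))
      ((g_meas a).aestronglyMeasurable)
    filter_upwards [ae_restrict_mem measurableSet_Ioi] with s hs
    rw [Real.norm_eq_abs, abs_of_nonneg (g_nonneg ha)]
    simpa using g_le_exp ha (le_of_lt hs)

noncomputable def Φ (a : ℝ) : ℝ := ∫ s in Set.Ioi (0:ℝ), g a s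

lemma Φ_hasDeriv {a₀ : ℝ} (ha₀ : 1 ≤ a₀) :
    HasDerivAt Φ (Real.sqrt (π / a₀) / 2) a₀ := by
  have key := _root_.hasDerivAt_integral_of_dominated_loc_of_deriv_le
    (μ := volume.restrict (Set.Ioi (0:ℝ))) (x₀ := a₀)
    (F := fun a s => g a s) (F' := fun a s => Real.exp (-a * s^2))
    (bound := fun s => Real.exp (-(1/2) * s^2)) (s := Metric.ball a₀ (1/2)) (Metric.ball_mem_nhds _ (by norm_num))
    ?meas ?int ?meas' ?bound ?bint ?diff
  case meas =>
    exact Filter.Eventually.of_forall fun a => (g_meas a).aestronglyMeasurable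
  case int => exact integrable_g ha₀
  case meas' =>
    exact (Real.continuous_exp.comp
      ((continuous_const.mul (continuous_pow 2)))).aestronglyMeasurable
  case bound =>
    refine Filter.Eventually.of_forall fun s => fun a ha => ?_
    rw [Real.norm_eq_abs, abs_of_pos (Real.exp_pos _), Real.exp_le_exp]
    have : a > a₀ - 1/2 := by
      have := abs_lt.mp (mem_ball_iff_norm.mp ha)
      linarith
    nlinarith [sq_nonneg s]
  case bint =>
    exact ((integrable_exp_neg_mul_sq (by norm_num : (0:ℝ) < 1/2))).restrict
  case diff =>
    filter_upwards [ae_restrict_mem measurableSet_Ioi] with s hs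
    intro a _
    have hs2 : s^2 ≠ 0 := pow_ne_zero 2 (ne_of_gt hs)
    have h1 : HasDerivAt (fun a : ℝ => -a * s^2) (-s^2) a := by
      simpa using ((hasDerivAt_id a).neg.mul_const (s^2))
    have h2 : HasDerivAt (fun a : ℝ => Real.exp (-a * s^2))
        (Real.exp (-a * s^2) * (-s^2)) a := h1.exp
    have h3 : HasDerivAt (fun a : ℝ => Real.exp (-s^2) - Real.exp (-a*s^2))
        (Real.exp (-a*s^2) * s^2) a := by
      simpa [Pi.sub_def] using (hasDerivAt_const a (Real.exp (-s^2))).sub h2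
    have h4 := h3.div_const (s^2)
    convert h4 using 1
    · rfl
    · rfl
    rw [mul_div_assoc, div_self hs2, mul_one]
  have := key.2
  have hgauss : (∫ s in Set.Ioi (0:ℝ), Real.exp (-a₀ * s^2)) = Real.sqrt (π / a₀) / 2 :=
    integral_gaussian_Ioi a₀
  rwa [hgauss] at this

lemma sqrt_eq_aux {u : ℝ} (hu : 1 ≤ u) :
    Real.sqrt (π / u) / 2 = Real.sqrt π * (1 / (2 * Real.sqrt u)) := by
  have h0 : Real.sqrt u ≠ 0 := ne_of_gt (Real.sqrt_pos.mpr (by linarith))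
  rw [Real.sqrt_div pi_pos.le u]
  field_simp

lemma sqrt_rep {a : ℝ} (ha : 1 ≤ a) :
    Real.sqrt a = 1 + Φ a / Real.sqrt π := by
  have hΦ1 : Φ 1 = 0 := by unfold Φ g; simp
  have hcont : ContinuousOn (fun u : ℝ => Real.sqrt (π / u) / 2) (Set.uIcc 1 a) := by
    intro u hu
    rw [Set.uIcc_of_le ha] at hu
    have hu0 : u ≠ 0 := by intro h; rw [h] at hu; exact absurd hu.1 (by norm_num)
    exact (((Real.continuous_sqrt.continuousAt.comp
      (continuousAt_const.div continuousAt_id hu0))).div_const 2).continuousWithinAt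
  have hftc : Φ a - Φ 1 = ∫ u in (1:ℝ)..a, Real.sqrt (π / u) / 2 := by
    refine (intervalIntegral.integral_eq_sub_of_hasDerivAt (fun u hu => ?_) ?_).symm
    · rw [Set.uIcc_of_le ha] at hu
      exact Φ_hasDeriv hu.1
    · exact hcont.intervalIntegrable
  have hval : ∫ u in (1:ℝ)..a, Real.sqrt (π / u) / 2
      = Real.sqrt π * Real.sqrt a - Real.sqrt π * Real.sqrt 1 := by
    refine intervalIntegral.integral_eq_sub_of_hasDerivAt
      (f := fun u => Real.sqrt π * Real.sqrt u) (fun u hu => ?_)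
      hcont.intervalIntegrable
    rw [Set.uIcc_of_le ha] at hu
    have hu0 : u ≠ 0 := by intro h; rw [h] at hu; exact absurd hu.1 (by norm_num)
    have := (Real.hasDerivAt_sqrt hu0).const_mul (Real.sqrt π)
    rw [sqrt_eq_aux hu.1]; exact this
  have hπ : Real.sqrt π ≠ 0 := ne_of_gt (Real.sqrt_pos.mpr pi_pos)
  have : Φ a = Real.sqrt π * Real.sqrt a - Real.sqrt π := by
    rw [hΦ1, sub_zero] at hftc
    rw [hftc, hval, Real.sqrt_one, mul_one]
  rw [this]
  field_simp
  ring

lemma key_neg {d n : ℕ} (x : Fin n → EuclideanSpace ℝ (Fin d))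
    (hx : Function.Injective x) {ε : ℝ} (hε : 0 < ε) (c : Fin n → ℝ) (hc : c ≠ 0)
    (hsum : ∑ i, c i = 0) :
    ∑ i, ∑ k, c i * c k * Real.sqrt (1 + ε^2 * ‖x i - x k‖^2) < 0 := by
  classical
  set a : Fin n × Fin n → ℝ := fun p => 1 + ε^2 * ‖x p.1 - x p.2‖^2 with ha_def
  have ha1 : ∀ p, 1 ≤ a p := fun p => by
    have : (0:ℝ) ≤ ε^2 * ‖x p.1 - x p.2‖^2 := by positivity
    simp [ha_def]; linarith
  -- the Gaussian quadratic form as a function of τ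
  set QQ : ℝ → ℝ := fun τ => ∑ i, ∑ k, c i * c k * Real.exp (-τ * ‖x i - x k‖^2) with hQQ_def
  have hQQ_nonneg : ∀ τ, 0 ≤ τ → 0 ≤ QQ τ := fun τ hτ => gauss_psd x τ hτ c
  -- pointwise identity
  have hsum2 : ∑ p : Fin n × Fin n, c p.1 * c p.2 = 0 := by
    rw [Fintype.sum_prod_type, ← Finset.sum_mul_sum, hsum, mul_zero]
  set h : ℝ → ℝ := fun s => Real.exp (-s^2) * (s^2)⁻¹ * QQ (ε^2 * s^2) with hh_def
  have hpt : ∀ s : ℝ, (∑ p : Fin n × Fin n, c p.1 * c p.2 * g (a p) s) = -h s := by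
    intro s
    have hexp : ∀ p : Fin n × Fin n, Real.exp (-(a p) * s^2)
        = Real.exp (-s^2) * Real.exp (-(ε^2 * s^2) * ‖x p.1 - x p.2‖^2) := by
      intro p
      rw [← Real.exp_add]
      congr 1
      simp only [ha_def]; ring
    have step : ∀ p : Fin n × Fin n, c p.1 * c p.2 * g (a p) s
        = c p.1 * c p.2 * (Real.exp (-s^2) * (s^2)⁻¹)
          - Real.exp (-s^2) * (s^2)⁻¹ * (c p.1 * c p.2
              * Real.exp (-(ε^2 * s^2) * ‖x p.1 - x p.2‖^2)) := by
      intro p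
      unfold g
      rw [hexp p, div_eq_mul_inv]
      ring
    rw [Finset.sum_congr rfl fun p _ => step p, Finset.sum_sub_distrib,
      ← Finset.sum_mul, hsum2, zero_mul, ← Finset.mul_sum]
    simp only [hh_def, hQQ_def, zero_sub, Fintype.sum_prod_type]
  -- the sqrt identity turns the quadratic form into an integral
  have hπ : (0:ℝ) < Real.sqrt π := Real.sqrt_pos.mpr pi_pos
  have hQF : ∑ i, ∑ k, c i * c k * Real.sqrt (1 + ε^2 * ‖x i - x k‖^2)
      = (Real.sqrt π)⁻¹ * ∑ p : Fin n × Fin n, c p.1 * c p.2 * Φ (a p) := by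
    have heq : (∑ i, ∑ k, c i * c k * Real.sqrt (1 + ε^2 * ‖x i - x k‖^2))
        = ∑ p : Fin n × Fin n, c p.1 * c p.2 * Real.sqrt (a p) :=
      (Fintype.sum_prod_type (f := fun p : Fin n × Fin n =>
        c p.1 * c p.2 * Real.sqrt (1 + ε^2 * ‖x p.1 - x p.2‖^2))).symm
    rw [heq]
    have : ∀ p : Fin n × Fin n, c p.1 * c p.2 * Real.sqrt (a p)
        = c p.1 * c p.2 + (Real.sqrt π)⁻¹ * (c p.1 * c p.2 * Φ (a p)) := by
      intro p
      rw [sqrt_rep (ha1 p)]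
      field_simp
    rw [Finset.sum_congr rfl fun p _ => this p, Finset.sum_add_distrib, hsum2,
      ← Finset.mul_sum, zero_add]
  -- swap sum and integral
  have hint : ∀ p : Fin n × Fin n, Integrable (fun s => c p.1 * c p.2 * g (a p) s)
      (volume.restrict (Set.Ioi (0:ℝ))) := fun p => (integrable_g (ha1 p)).const_mul _
  have hswap : ∑ p : Fin n × Fin n, c p.1 * c p.2 * Φ (a p)
      = ∫ s in Set.Ioi (0:ℝ), ∑ p : Fin n × Fin n, c p.1 * c p.2 * g (a p) s := by
    rw [integral_finset_sum _ fun p _ => hint p]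
    refine Finset.sum_congr rfl fun p _ => ?_
    unfold Φ
    rw [integral_const_mul]
  have hIeq : ∑ p : Fin n × Fin n, c p.1 * c p.2 * Φ (a p) = -∫ s in Set.Ioi (0:ℝ), h s := by
    rw [hswap, ← integral_neg]
    exact integral_congr_ae (Filter.Eventually.of_forall fun s => by simpa using hpt s)
  -- h is integrable on Ioi 0
  have h_integrable : IntegrableOn h (Set.Ioi (0:ℝ)) := by
    have : IntegrableOn (fun s => ∑ p : Fin n × Fin n, c p.1 * c p.2 * g (a p) s)
        (Set.Ioi (0:ℝ)) := integrable_finset_sum _ fun p _ => hint p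
    have hIO : IntegrableOn (fun s => -(∑ p : Fin n × Fin n, c p.1 * c p.2 * g (a p) s))
        (Set.Ioi (0:ℝ)) := this.neg
    refine hIO.congr_fun (fun s _ => ?_) measurableSet_Ioi
    beta_reduce; rw [hpt s]; ring
  -- positivity of the integral
  have hL : 0 < ∑ i, (c i)^2 := by
    obtain ⟨i, hi⟩ : ∃ i, c i ≠ 0 := Function.ne_iff.mp hc
    exact Finset.sum_pos' (fun j _ => sq_nonneg _) ⟨i, Finset.mem_univ i, by positivity⟩
  set L := ∑ i, (c i)^2 with hL_def
  have hterm : ∀ i k : Fin n, Tendsto (fun τ : ℝ => c i * c k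
      * Real.exp (-τ * ‖x i - x k‖^2)) atTop (𝓝 (if k = i then c i * c k else 0)) := by
    intro i k
    by_cases hik : k = i
    · subst hik
      simp only [sub_self, norm_zero, if_true]
      have : ∀ τ : ℝ, c k * c k * Real.exp (-τ * (0:ℝ)^2) = c k * c k := by
        intro τ; norm_num
      simp only [this]
      exact tendsto_const_nhds
    · have hxx : x i - x k ≠ 0 := sub_ne_zero.mpr (fun hxx => hik (hx hxx).symm)
      have hr : 0 < ‖x i - x k‖^2 := by
        have := norm_pos_iff.mpr hxx
        positivity
      have h1 : Tendsto (fun τ : ℝ => -τ * ‖x i - x k‖^2) atTop atBot := by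
        have ha' : Tendsto (fun τ : ℝ => τ * ‖x i - x k‖^2) atTop atTop :=
          (tendsto_id (α := ℝ)).atTop_mul_const hr
        exact Tendsto.congr (fun τ => (neg_mul τ _).symm) (tendsto_neg_atTop_atBot.comp ha')
      have h2 := Real.tendsto_exp_atBot.comp h1
      have h3 := h2.const_mul (c i * c k)
      simpa [hik, mul_zero] using h3
  have htend : Tendsto QQ atTop (𝓝 L) := by
    have h4 : Tendsto (fun τ => ∑ i, ∑ k, c i * c k * Real.exp (-τ * ‖x i - x k‖^2)) atTop
        (𝓝 (∑ i, ∑ k, if k = i then c i * c k else 0)) :=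
      tendsto_finset_sum _ fun i _ => tendsto_finset_sum _ fun k _ => hterm i k
    simp only [Finset.sum_ite_eq', Finset.mem_univ, if_true] at h4
    have h5 : ∑ i, c i * c i = L := by rw [hL_def]; exact Finset.sum_congr rfl fun i _ => (sq (c i)).symm
    rw [h5] at h4
    exact h4
  obtain ⟨S, hS⟩ := Filter.eventually_atTop.mp
    (htend.eventually (eventually_ge_nhds (by linarith : L/2 < L)))
  set s₀ : ℝ := max 1 (Real.sqrt (max S 0) / ε) with hs₀_def
  have hs₀1 : 1 ≤ s₀ := le_max_left _ _
  have hs₀pos : 0 < s₀ := lt_of_lt_of_le one_pos hs₀1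
  have hQlow : ∀ s ∈ Set.Ioc s₀ (s₀+1), L/2 ≤ QQ (ε^2 * s^2) := by
    intro s hs
    apply hS
    have h1 : Real.sqrt (max S 0) / ε ≤ s₀ := le_max_right _ _
    have h2 : Real.sqrt (max S 0) ≤ ε * s := by
      rw [div_le_iff₀ hε] at h1
      nlinarith [hs.1]
    have h3 : max S 0 ≤ (ε*s)^2 := by
      have h4 : 0 ≤ Real.sqrt (max S 0) := Real.sqrt_nonneg _
      calc max S 0 = (Real.sqrt (max S 0))^2 := (Real.sq_sqrt (le_max_right S 0)).symm
        _ ≤ (ε*s)^2 := by nlinarith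
    calc S ≤ max S 0 := le_max_left _ _
      _ ≤ (ε*s)^2 := h3
      _ = ε^2 * s^2 := by ring
  set δ : ℝ := Real.exp (-(s₀+1)^2) * ((s₀+1)^2)⁻¹ * (L/2) with hδ_def
  have hδpos : 0 < δ :=
    mul_pos (mul_pos (Real.exp_pos _) (inv_pos.mpr (by positivity))) (by linarith)
  have hlow : ∀ s ∈ Set.Ioc s₀ (s₀+1), δ ≤ h s := by
    intro s hs
    have hspos : 0 < s := lt_trans hs₀pos hs.1
    have hsle : s ≤ s₀ + 1 := hs.2
    have hQs := hQlow s hs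
    have e1 : Real.exp (-(s₀+1)^2) ≤ Real.exp (-s^2) := by
      rw [Real.exp_le_exp]; nlinarith
    have e2 : ((s₀+1)^2)⁻¹ ≤ (s^2)⁻¹ := by
      apply inv_anti₀ (by positivity) (by nlinarith)
    calc δ = Real.exp (-(s₀+1)^2) * ((s₀+1)^2)⁻¹ * (L/2) := rfl
      _ ≤ Real.exp (-s^2) * (s^2)⁻¹ * QQ (ε^2*s^2) :=
          mul_le_mul (mul_le_mul e1 e2 (by positivity) (Real.exp_pos _).le) hQs
            (by linarith) (by positivity)
      _ = h s := rfl
  have hsubset : Set.Ioc s₀ (s₀+1) ⊆ Set.Ioi (0:ℝ) := fun s hs => lt_trans hs₀pos hs.1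
  have hIod : IntegrableOn h (Set.Ioc s₀ (s₀+1)) := h_integrable.mono_set hsubset
  have hI1 : δ * (volume (Set.Ioc s₀ (s₀+1))).toReal ≤ ∫ s in Set.Ioc s₀ (s₀+1), h s :=
    setIntegral_ge_of_const_le_real measurableSet_Ioc
      (ne_of_lt measure_Ioc_lt_top) hlow hIod
  have hvol : (volume (Set.Ioc s₀ (s₀+1))).toReal = 1 := by
    rw [Real.volume_Ioc]
    norm_num
  have hnn : 0 ≤ᵐ[volume.restrict (Set.Ioi (0:ℝ))] h := by
    filter_upwards [ae_restrict_mem measurableSet_Ioi] with s hs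
    exact mul_nonneg (mul_nonneg (Real.exp_pos _).le (by positivity))
      (hQQ_nonneg _ (by positivity))
  have hI2 : ∫ s in Set.Ioc s₀ (s₀+1), h s ≤ ∫ s in Set.Ioi (0:ℝ), h s :=
    setIntegral_mono_set h_integrable hnn (HasSubset.Subset.eventuallyLE hsubset)
  have hIpos : 0 < ∫ s in Set.Ioi (0:ℝ), h s := by
    have := hI1
    rw [hvol, mul_one] at this
    linarith
  rw [hQF, hIeq]
  exact mul_neg_of_pos_of_neg (inv_pos.mpr hπ) (neg_lt_zero.mpr hIpos)

end Aux

/-- Micchelli's theorem for the multiquadric: for pairwise distinct nodes and `ε > 0`,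
the symmetric matrix `A_{ik} = √(1 + ε² ‖x_i − x_k‖²)` is invertible, and it has
exactly one positive eigenvalue and `n − 1` negative eigenvalues. -/
theorem stmt9 {d n : ℕ} (hn : 0 < n) (x : Fin n → EuclideanSpace ℝ (Fin d))
    (hx : Function.Injective x) (ε : ℝ) (hε : 0 < ε) :
    IsUnit (Matrix.of fun i k => Real.sqrt (1 + ε ^ 2 * ‖x i - x k‖ ^ 2) :
        Matrix (Fin n) (Fin n) ℝ) ∧
    ∃ hA : (Matrix.of fun i k => Real.sqrt (1 + ε ^ 2 * ‖x i - x k‖ ^ 2) :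
        Matrix (Fin n) (Fin n) ℝ).IsHermitian,
      (Finset.univ.filter fun i => 0 < hA.eigenvalues i).card = 1 ∧
      (Finset.univ.filter fun i => hA.eigenvalues i < 0).card = n - 1 := by
  classical
  set A : Matrix (Fin n) (Fin n) ℝ :=
    Matrix.of fun i k => Real.sqrt (1 + ε ^ 2 * ‖x i - x k‖ ^ 2) with hA_def
  have hHerm : A.IsHermitian := by
    rw [Matrix.IsHermitian]
    ext i k
    simp only [Matrix.conjTranspose_apply, hA_def, Matrix.of_apply, star_trivial,
      norm_sub_rev (x k) (x i)]
  -- negativity of quadratic form on the hyperplane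
  have hq : ∀ v : Fin n → ℝ, v ≠ 0 → ∑ i, v i = 0 →
      dotProduct v (A.mulVec v) < 0 := by
    intro v hv hvsum
    have hexp : dotProduct v (A.mulVec v)
        = ∑ i, ∑ k, v i * v k * Real.sqrt (1 + ε^2*‖x i - x k‖^2) := by
      simp only [dotProduct, Matrix.mulVec, hA_def, Matrix.of_apply, Finset.mul_sum]
      exact Finset.sum_congr rfl fun i _ => Finset.sum_congr rfl fun k _ => by ring
    rw [hexp]
    exact key_neg x hx hε v hv hvsum
  set lam := hHerm.eigenvalues with hlam_def
  set B := hHerm.eigenvectorBasis with hB_def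
  have horth : ∀ i j, (∑ l, B i l * B j l) = if i = j then 1 else 0 := by
    intro i j
    have h1 := (orthonormal_iff_ite.mp B.orthonormal) i j
    rw [PiLp.inner_apply] at h1
    simpa [mul_comm] using h1
  have hmul : ∀ j, A.mulVec (B j) = lam j • (B j) := fun j => hHerm.mulVec_eigenvectorBasis j
  -- at most one nonnegative eigenvalue
  have at_most_one : ∀ i j, i ≠ j → 0 ≤ lam i → 0 ≤ lam j → False := by
    intro i j hij hi hj
    set ui : Fin n → ℝ := ⇑(B i) with hui
    set uj : Fin n → ℝ := ⇑(B j) with huj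
    have hbil : ∀ a b c e : ℝ,
        (∑ l, (a * ui l + b * uj l) * (c * ui l + e * uj l)) = a*c + b*e := by
      intro a b c e
      have hterm : ∀ l, (a * ui l + b * uj l) * (c * ui l + e * uj l)
          = a*c*(ui l*ui l) + a*e*(ui l*uj l) + b*c*(uj l*ui l) + b*e*(uj l*uj l) :=
        fun l => by ring
      simp_rw [hterm]
      rw [Finset.sum_add_distrib, Finset.sum_add_distrib, Finset.sum_add_distrib,
        ← Finset.mul_sum, ← Finset.mul_sum, ← Finset.mul_sum, ← Finset.mul_sum,
        horth i i, horth i j, horth j i, horth j j]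
      simp [hij, hij.symm]
    set si := ∑ l, ui l with hsi
    set sj := ∑ l, uj l with hsj
    set α : ℝ := if si = 0 ∧ sj = 0 then 1 else sj with hα
    set β : ℝ := if si = 0 ∧ sj = 0 then 0 else -si with hβ
    set v : Fin n → ℝ := fun l => α * ui l + β * uj l with hv_def
    have hvsum : ∑ l, v l = 0 := by
      simp only [hv_def, Finset.sum_add_distrib, ← Finset.mul_sum, ← hsi, ← hsj]
      by_cases hcase : si = 0 ∧ sj = 0
      · simp [hα, hβ, hcase, hcase.1]
      · simp only [hα, hβ, if_neg hcase]
        ring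
    have hvv : ∑ l, v l * v l = α^2 + β^2 := by
      simp only [hv_def]
      rw [hbil α β α β]; ring
    have hαβ : 0 < α^2 + β^2 := by
      by_cases hcase : si = 0 ∧ sj = 0
      · simp [hα, hβ, hcase]
      · have : si ≠ 0 ∨ sj ≠ 0 := by tauto
        rcases this with h | h
        · have : β = -si := by rw [hβ, if_neg hcase]
          have hβne : β ≠ 0 := by rw [this]; simpa using h
          have h2 : 0 < β^2 := lt_of_le_of_ne (sq_nonneg β) (Ne.symm (pow_ne_zero 2 hβne))
          nlinarith [sq_nonneg α]
        · have : α = sj := by rw [hα, if_neg hcase]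
          have hαne : α ≠ 0 := by rw [this]; exact h
          have h2 : 0 < α^2 := lt_of_le_of_ne (sq_nonneg α) (Ne.symm (pow_ne_zero 2 hαne))
          nlinarith [sq_nonneg β]
    have hvne : v ≠ 0 := by
      intro h0
      rw [h0] at hvv
      simp at hvv
      rw [← hvv] at hαβ
      exact lt_irrefl _ hαβ
    have hAv : A.mulVec v = fun l => (α * lam i) * ui l + (β * lam j) * uj l := by
      have hv2 : v = α • ui + β • uj := rfl
      rw [hv2, Matrix.mulVec_add, Matrix.mulVec_smul, Matrix.mulVec_smul, hmul i, hmul j]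
      funext l
      show α * (lam i * ui l) + β * (lam j * uj l) = (α * lam i) * ui l + (β * lam j) * uj l
      ring
    have hqv : dotProduct v (A.mulVec v) = α^2 * lam i + β^2 * lam j := by
      rw [hAv]
      show (∑ l, v l * ((α * lam i) * ui l + (β * lam j) * uj l)) = _
      simp only [hv_def]
      rw [hbil α β (α * lam i) (β * lam j)]
      ring
    have := hq v hvne hvsum
    rw [hqv] at this
    nlinarith
  -- trace is positive
  have htrace : A.trace = (n : ℝ) := by
    simp only [Matrix.trace, Matrix.diag, hA_def, Matrix.of_apply, sub_self, norm_zero]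
    norm_num
  have hsum_lam : ∑ i, lam i = (n : ℝ) := by
    have h1 := hHerm.spectral_theorem
    have h2 : A.trace = (Matrix.diagonal (RCLike.ofReal ∘ lam)).trace := by
      conv_lhs => rw [h1]
      rw [Unitary.conjStarAlgAut_apply]
      rw [Matrix.trace_mul_cycle]
      rw [show (star (hHerm.eigenvectorUnitary : Matrix (Fin n) (Fin n) ℝ))
          * (hHerm.eigenvectorUnitary : Matrix (Fin n) (Fin n) ℝ) = 1 from
        Unitary.coe_star_mul_self _, one_mul]
    rw [htrace] at h2
    rw [Matrix.trace_diagonal] at h2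
    simpa using h2.symm
  have hpos_ex : ∃ i, 0 < lam i := by
    by_contra hno
    push_neg at hno
    have : ∑ i, lam i ≤ 0 := Finset.sum_nonpos fun i _ => hno i
    rw [hsum_lam] at this
    have : (0:ℝ) < n := by exact_mod_cast hn
    linarith
  -- counting
  set nonnegF := Finset.univ.filter (fun i => 0 ≤ lam i) with hnn_def
  have hcard_nonneg : nonnegF.card ≤ 1 := by
    by_contra hgt
    push_neg at hgt
    obtain ⟨a, ha, b, hb, hab⟩ := Finset.one_lt_card.mp hgt
    exact at_most_one a b hab (Finset.mem_filter.mp ha).2 (Finset.mem_filter.mp hb).2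
  set posF := Finset.univ.filter (fun i => 0 < lam i) with hpos_def
  have hsubset : posF ⊆ nonnegF := by
    intro i hi
    rw [hpos_def, Finset.mem_filter] at hi
    exact Finset.mem_filter.mpr ⟨hi.1, le_of_lt hi.2⟩
  have hpos_nonempty : posF.Nonempty := by
    obtain ⟨i, hi⟩ := hpos_ex
    exact ⟨i, Finset.mem_filter.mpr ⟨Finset.mem_univ i, hi⟩⟩
  have hcard_pos : posF.card = 1 :=
    le_antisymm (le_trans (Finset.card_le_card hsubset) hcard_nonneg)
      (Finset.Nonempty.card_pos hpos_nonempty)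
  have hcard_nonneg1 : nonnegF.card = 1 :=
    le_antisymm hcard_nonneg
      (le_trans (by rw [hcard_pos]) (Finset.card_le_card hsubset))
  have hcard_neg : (Finset.univ.filter (fun i => lam i < 0)).card = n - 1 := by
    have h1 := Finset.card_filter_add_card_filter_not
      (s := Finset.univ) (p := fun i => 0 ≤ lam i)
    rw [Finset.card_univ, Fintype.card_fin] at h1
    have h2 : (Finset.univ.filter (fun i => ¬ 0 ≤ lam i))
        = Finset.univ.filter (fun i => lam i < 0) := by
      apply Finset.filter_congr
      intro i _
      simp [not_le]
    rw [h2, ← hnn_def, hcard_nonneg1] at h1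
    omega
  -- no zero eigenvalues, invertibility
  have hne0 : ∀ i, lam i ≠ 0 := by
    intro i hi0
    obtain ⟨j, hj⟩ := hpos_nonempty
    have hi_mem : i ∈ nonnegF := Finset.mem_filter.mpr ⟨Finset.mem_univ i, le_of_eq hi0.symm⟩
    have hj_mem : j ∈ nonnegF := hsubset hj
    have : i = j := Finset.card_le_one.mp hcard_nonneg i hi_mem j hj_mem
    rw [this] at hi0
    have := (Finset.mem_filter.mp hj).2
    rw [hi0] at this
    exact lt_irrefl _ this
  have hdet : A.det = ∏ i, lam i := by
    have := hHerm.det_eq_prod_eigenvalues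
    simpa using this
  have hunit : IsUnit A := by
    rw [Matrix.isUnit_iff_isUnit_det, hdet]
    exact isUnit_iff_ne_zero.mpr (Finset.prod_ne_zero_iff.mpr fun i _ => hne0 i)
  exact ⟨hunit, hHerm, hcard_pos, hcard_neg⟩
end

section
/- (Bounded overlap of patches, K = 2^d.) Let H > 0 and 1 ≤ d ≤ 3. For k ∈ ℤ^d let c_k = (k + (1/2, …, 1/2)) H. Then for every x ∈ ℝ^d, the number of indices k ∈ ℤ^d with ‖x − c_k‖ ≤ √d · H / 2 is at most 2^d, where ‖·‖ is the Euclidean norm on ℝ^d. -/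
/-- The center `c_k = (k + (1/2,…,1/2)) H` of the grid cell `Q_k` of a Cartesian grid
of spacing `H`, as a point of `ℝ^d`. -/
noncomputable def cellCenter (d : ℕ) (H : ℝ) (k : Fin d → ℤ) :
    EuclideanSpace ℝ (Fin d) :=
  WithLp.toLp 2 (fun i => ((k i : ℝ) + 1 / 2) * H)

lemma coord_abs_le_norm {d : ℕ} (v : EuclideanSpace ℝ (Fin d)) (i : Fin d) :
    |v i| ≤ ‖v‖ := by
  rw [EuclideanSpace.norm_eq]
  have h1 : |v i| = Real.sqrt (|v i| ^ 2) := by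
    rw [Real.sqrt_sq_eq_abs, abs_abs]
  rw [h1]
  apply Real.sqrt_le_sqrt
  exact Finset.single_le_sum (f := fun j => |v j| ^ 2)
    (fun j _ => by positivity) (Finset.mem_univ i)

lemma int_near (n : ℤ) (b : ℝ) (h : |(n : ℝ) - b| < 1) : n = ⌊b⌋ ∨ n = ⌈b⌉ := by
  rw [abs_lt] at h
  rcases le_or_gt (n : ℝ) b with hle | hlt
  · left
    have h1 : n ≤ ⌊b⌋ := Int.le_floor.mpr hle
    have h2 : (⌊b⌋ : ℝ) ≤ b := Int.floor_le b
    have : (⌊b⌋ : ℝ) < n + 1 := by linarith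
    have : ⌊b⌋ ≤ n := by exact_mod_cast Int.lt_add_one_iff.mp (by exact_mod_cast this)
    omega
  · right
    have h1 : ⌈b⌉ ≤ n := Int.ceil_le.mpr hlt.le
    have h2 : b ≤ (⌈b⌉ : ℝ) := Int.le_ceil b
    have : (n : ℝ) < ⌈b⌉ + 1 := by linarith
    have : n ≤ ⌈b⌉ := by exact_mod_cast Int.lt_add_one_iff.mp (by exact_mod_cast this)
    omega

/-- Bounded overlap of patches: for `1 ≤ d ≤ 3` and any point `x ∈ ℝ^d`, at most `2^d`
of the closed balls of radius `√d H / 2` centered at the cell centers `c_k` of a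
Cartesian grid of spacing `H > 0` contain `x`. -/
theorem stmt15 (d : ℕ) (hd1 : 1 ≤ d) (hd3 : d ≤ 3) (H : ℝ) (hH : 0 < H)
    (x : EuclideanSpace ℝ (Fin d)) :
    {k : Fin d → ℤ | ‖x - cellCenter d H k‖ ≤ Real.sqrt d * H / 2}.Finite ∧
    {k : Fin d → ℤ | ‖x - cellCenter d H k‖ ≤ Real.sqrt d * H / 2}.ncard ≤ 2 ^ d := by
  set a : Fin d → ℝ := fun i => x i / H - 1 / 2 with ha
  set T : Finset (Fin d → ℤ) :=
    Fintype.piFinset (fun i => ({⌊a i⌋, ⌈a i⌉} : Finset ℤ)) with hT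
  have hsqrt : Real.sqrt d < 2 := by
    have : Real.sqrt d ≤ Real.sqrt 3 := by
      apply Real.sqrt_le_sqrt; exact_mod_cast hd3
    have h3 : Real.sqrt 3 < 2 := by
      rw [show (2 : ℝ) = Real.sqrt 4 by
        rw [show (4 : ℝ) = 2 ^ 2 by norm_num, Real.sqrt_sq (by norm_num)]]
      exact Real.sqrt_lt_sqrt (by norm_num) (by norm_num)
    linarith
  have hsub : {k : Fin d → ℤ | ‖x - cellCenter d H k‖ ≤ Real.sqrt d * H / 2} ⊆ ↑T := by
    intro k hk
    simp only [Set.mem_setOf_eq] at hk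
    simp only [hT, Finset.coe_insert, Fintype.mem_piFinset, Finset.mem_insert,
      Finset.mem_singleton, Finset.mem_coe]
    intro i
    have hcoord : |x i - ((k i : ℝ) + 1 / 2) * H| ≤ Real.sqrt d * H / 2 := by
      have := coord_abs_le_norm (x - cellCenter d H k) i
      have heq : (x - cellCenter d H k) i = x i - ((k i : ℝ) + 1 / 2) * H := by simp [cellCenter]
      rw [heq] at this
      linarith
    have hlt : |x i - ((k i : ℝ) + 1 / 2) * H| < H := by
      have : Real.sqrt d * H / 2 < H := by nlinarith
      linarith
    have hne : |(k i : ℝ) - a i| < 1 := by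
      have h1 : (k i : ℝ) - a i = -((x i - ((k i : ℝ) + 1 / 2) * H) / H) := by
        simp only [ha]; field_simp; ring
      rw [h1, abs_neg, abs_div, abs_of_pos hH, div_lt_one hH]
      exact hlt
    exact int_near (k i) (a i) hne
  have hTfin : (↑T : Set (Fin d → ℤ)).Finite := T.finite_toSet
  have hfin := hTfin.subset hsub
  refine ⟨hfin, ?_⟩
  calc {k : Fin d → ℤ | ‖x - cellCenter d H k‖ ≤ Real.sqrt d * H / 2}.ncard
      ≤ (↑T : Set (Fin d → ℤ)).ncard := Set.ncard_le_ncard hsub hTfin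
    _ = T.card := Set.ncard_coe_finset T
    _ ≤ 2 ^ d := by
        rw [hT, Fintype.card_piFinset]
        calc ∏ i : Fin d, ({⌊a i⌋, ⌈a i⌉} : Finset ℤ).card
            ≤ ∏ _i : Fin d, 2 := by
              apply Finset.prod_le_prod (fun _ _ => Nat.zero_le _)
              intro i _
              exact Finset.card_insert_le _ _ |>.trans (by simp)
          _ = 2 ^ d := by simp
end
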